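/- Let C_i = Σ_{π ∈ G_{r,n}, des(π) = i} π ∈ ℚ[G_{r,n}] for i = 0, …, n, and for each i ∈ {0, …, n} let c_i ∈ ℚ[G_{r,n}] be the coefficient of x^i when Σ_{π ∈ G_{r,n}} b((x − 1)/r − des(π))·π is expanded as a polynomial in x with coefficients in ℚ[G_{r,n}], where b(z) = (1/n!)·∏_{m=1}^{n} (z + m). Then the ℚ-linear span of {c_0, c_1, …, c_n} equals the ℚ-linear span of {C_0, C_1, …, C_n}; that is, the orthogonal idempotents c_i span the colored Eulerian descent algebra. -/
import Mathlib


open scoped BigOperators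

/-- Lexicographic (color-first) strict order on colored letters `(value, color)`. -/
def letterLT (x y : ℕ × ℕ) : Prop :=
  x.2 < y.2 ∨ (x.2 = y.2 ∧ x.1 < y.1)

instance : DecidableRel letterLT := fun x y => by
  unfold letterLT; infer_instance

/-- The colored permutation group `G_{r,n}`. -/
@[ext] structure ColoredPerm (r n : ℕ) where
  perm : Equiv.Perm (Fin n)
  col : Fin n → ZMod r

namespace ColoredPerm

variable {r n : ℕ}

instance : Mul (ColoredPerm r n) :=
  ⟨fun a b => ⟨a.perm * b.perm, fun i => a.col (b.perm i) + b.col i⟩⟩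

instance : One (ColoredPerm r n) :=
  ⟨⟨1, fun _ => 0⟩⟩

instance : Inv (ColoredPerm r n) :=
  ⟨fun a => ⟨a.perm⁻¹, fun i => -a.col (a.perm⁻¹ i)⟩⟩

instance : Group (ColoredPerm r n) where
  mul_assoc a b c := by
    refine ColoredPerm.ext (mul_assoc _ _ _) ?_
    funext i
    show a.col (b.perm (c.perm i)) + b.col (c.perm i) + c.col i
        = a.col ((b.perm * c.perm) i) + (b.col (c.perm i) + c.col i)
    rw [Equiv.Perm.mul_apply, add_assoc]
  one_mul a := by
    refine ColoredPerm.ext (one_mul _) ?_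
    funext i
    show (0 : ZMod r) + a.col i = a.col i
    rw [zero_add]
  mul_one a := by
    refine ColoredPerm.ext (mul_one _) ?_
    funext i
    show a.col ((1 : Equiv.Perm (Fin n)) i) + 0 = a.col i
    simp
  inv_mul_cancel a := by
    refine ColoredPerm.ext (inv_mul_cancel _) ?_
    funext i
    show -a.col (a.perm⁻¹ (a.perm i)) + a.col i = 0
    simp

/-- `ColoredPerm r n` is equivalent (as a type) to a product. -/
def toProd : ColoredPerm r n ≃ Equiv.Perm (Fin n) × (Fin n → ZMod r) where
  toFun a := (a.perm, a.col)
  invFun p := ⟨p.1, p.2⟩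
  left_inv _ := rfl
  right_inv _ := rfl

instance [NeZero r] : Fintype (ColoredPerm r n) := Fintype.ofEquiv _ toProd.symm

instance : DecidableEq (ColoredPerm r n) := toProd.decidableEq

/-- The `i`-th letter of the one-line notation (0-indexed), as a pair (value, color);
for `i = n` this is the sentinel letter `0₁`. Values are in `{1, …, n}`. -/
def letterAt (a : ColoredPerm r n) (i : ℕ) : ℕ × ℕ :=
  if h : i < n then ((a.perm ⟨i, h⟩ : ℕ) + 1, (a.col ⟨i, h⟩).val) else (0, 1)

/-- The descent set of a colored permutation (positions 0-indexed: position `i`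
corresponds to the paper's `i+1 ∈ {1, …, n}`). -/
def Des (a : ColoredPerm r n) : Finset (Fin n) :=
  Finset.univ.filter fun i : Fin n => letterLT (letterAt a (i.1 + 1)) (letterAt a i.1)

/-- The descent number. -/
def des (a : ColoredPerm r n) : ℕ := (Des a).card

/-- The internal descent number `|Des(π) ∩ {1, …, n−1}|`. -/
def intdes (a : ColoredPerm r n) : ℕ :=
  ((Des a).filter fun i : Fin n => i.1 + 1 < n).card

end ColoredPerm

open ColoredPerm

/-- `C_i`: the formal sum, in the group algebra `ℚ[G_{r,n}]`, of all colored
permutations with exactly `i` descents. -/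
noncomputable def eulerianBasis (r n : ℕ) [NeZero r] (i : ℕ) :
    MonoidAlgebra ℚ (ColoredPerm r n) :=
  ∑ π ∈ Finset.univ.filter (fun π : ColoredPerm r n => des π = i),
    MonoidAlgebra.of ℚ (ColoredPerm r n) π

/-- The polynomial (in the variable `x`, over `ℚ`)
`b((x − 1)/r − d) = (1/n!) ∏_{m=1}^{n} ((x − 1)/r − d + m)`. -/
noncomputable def idemPoly (r n : ℕ) (d : ℕ) : Polynomial ℚ :=
  Polynomial.C ((n.factorial : ℚ))⁻¹ *
    ∏ m ∈ Finset.Icc 1 n,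
      (Polynomial.C ((r : ℚ))⁻¹ * (Polynomial.X - 1) -
        Polynomial.C (d : ℚ) + Polynomial.C (m : ℚ))

/-- `c_i`: the coefficient of `x^i` in `Σ_{π ∈ G_{r,n}} b((x−1)/r − des(π))·π`,
viewed as an element of the group algebra `ℚ[G_{r,n}]`. -/
noncomputable def eulerianIdem (r n : ℕ) [NeZero r] (i : ℕ) :
    MonoidAlgebra ℚ (ColoredPerm r n) :=
  ∑ π : ColoredPerm r n,
    (idemPoly r n (des π)).coeff i • MonoidAlgebra.of ℚ (ColoredPerm r n) π

open Polynomial Finset Matrix in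
lemma ColoredPerm.des_le {r n : ℕ} (a : ColoredPerm r n) : des a ≤ n := by
  classical
  calc des a ≤ (Finset.univ : Finset (Fin n)).card :=
        Finset.card_le_card (Finset.filter_subset _ _)
    _ = n := by simp

lemma idemPoly_natDegree_lt (r n d : ℕ) : (idemPoly r n d).natDegree < n + 1 := by
  have h : (idemPoly r n d).natDegree ≤ n := by
    unfold idemPoly
    refine le_trans (Polynomial.natDegree_C_mul_le _ _) ?_
    refine le_trans (Polynomial.natDegree_prod_le _ _) ?_
    refine le_trans (Finset.sum_le_card_nsmul _ _ 1 ?_) ?_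
    · intro m _
      compute_degree
    · simp [Nat.card_Icc]
  omega

lemma idemPoly_eval (r : ℕ) [NeZero r] (n d : ℕ) (t : ℚ) :
    (idemPoly r n d).eval (1 - r * t) =
      (n.factorial : ℚ)⁻¹ * ∏ m ∈ Finset.Icc 1 n, ((m : ℚ) - t - d) := by
  have hr : (r : ℚ) ≠ 0 := Nat.cast_ne_zero.mpr (NeZero.ne r)
  unfold idemPoly
  rw [Polynomial.eval_mul, Polynomial.eval_C, Polynomial.eval_prod]
  congr 1
  refine Finset.prod_congr rfl fun m _ => ?_
  simp only [Polynomial.eval_add, Polynomial.eval_sub, Polynomial.eval_mul, Polynomial.eval_C,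
    Polynomial.eval_X, Polynomial.eval_one]
  field_simp
  ring

open Matrix Polynomial

/-- The `ℚ`-span of the orthogonal idempotents `c_0, …, c_n` equals the `ℚ`-span of
the descent-number sums `C_0, …, C_n`: the `c_i` span the colored Eulerian
descent algebra. -/
theorem eulerianIdem_span (r n : ℕ) [NeZero r] (hn : 1 ≤ n) :
    Submodule.span ℚ {x : MonoidAlgebra ℚ (ColoredPerm r n) |
        ∃ m ≤ n, x = eulerianIdem r n m} =
      Submodule.span ℚ {x : MonoidAlgebra ℚ (ColoredPerm r n) |
        ∃ m ≤ n, x = eulerianBasis r n m} := by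
  classical
  set M : Matrix (Fin (n+1)) (Fin (n+1)) ℚ :=
    Matrix.of (fun i d : Fin (n+1) => (idemPoly r n d.1).coeff i.1) with hM
  -- each c_i is a combination of the C_d
  have hcC : ∀ i : Fin (n+1),
      eulerianIdem r n i.1 = ∑ d : Fin (n+1), M i d • eulerianBasis r n d.1 := by
    intro i
    have hfib := Finset.sum_fiberwise (Finset.univ : Finset (ColoredPerm r n))
      (fun π => (⟨des π, Nat.lt_succ_of_le (ColoredPerm.des_le π)⟩ : Fin (n+1)))
      (fun π => (idemPoly r n (des π)).coeff i.1 • MonoidAlgebra.of ℚ (ColoredPerm r n) π)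
    rw [eulerianIdem, ← hfib]
    refine Finset.sum_congr rfl fun d _ => ?_
    have hfilter : (Finset.univ.filter fun π : ColoredPerm r n =>
        (⟨des π, Nat.lt_succ_of_le (ColoredPerm.des_le π)⟩ : Fin (n+1)) = d)
        = Finset.univ.filter fun π : ColoredPerm r n => des π = d.1 := by
      apply Finset.filter_congr
      intro π _
      simp [Fin.ext_iff]
    rw [hfilter, eulerianBasis, Finset.smul_sum]
    refine Finset.sum_congr rfl fun π hπ => ?_
    have hd : des π = d.1 := (Finset.mem_filter.mp hπ).2
    rw [hd]
    rfl
  -- the coefficient matrix is invertible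
  have hMdet : IsUnit M.det := by
    set A : Matrix (Fin (n+1)) (Fin (n+1)) ℚ :=
      Matrix.of (fun d k : Fin (n+1) =>
        (idemPoly r n d.1).eval (1 - (r:ℚ) * ((n:ℚ) + 1 - (k.1:ℚ)))) with hA
    set V : Matrix (Fin (n+1)) (Fin (n+1)) ℚ :=
      Matrix.of (fun i k : Fin (n+1) => ((1:ℚ) - (r:ℚ) * ((n:ℚ) + 1 - (k.1:ℚ))) ^ i.1) with hV
    have hAMV : A = Mᵀ * V := by
      ext d k
      rw [Matrix.mul_apply]
      simp only [hA, hV, hM, Matrix.of_apply, Matrix.transpose_apply]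
      rw [Polynomial.eval_eq_sum_range' (idemPoly_natDegree_lt r n d.1),
        ← Fin.sum_univ_eq_sum_range]
    have hAtri : ∀ d k : Fin (n+1), d < k → A d k = 0 := by
      intro d k hdk
      have hk : d.1 < k.1 := hdk
      simp only [hA, Matrix.of_apply]
      rw [idemPoly_eval]
      apply mul_eq_zero_of_right
      apply Finset.prod_eq_zero (i := n + 1 - k.1 + d.1)
      · rw [Finset.mem_Icc]
        omega
      · have hkn : k.1 ≤ n + 1 := le_of_lt k.isLt
        rw [Nat.cast_add, Nat.cast_sub hkn]
        push_cast
        ring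
    have hAdiag : ∀ d : Fin (n+1), A d d ≠ 0 := by
      intro d
      simp only [hA, Matrix.of_apply]
      rw [idemPoly_eval]
      apply mul_ne_zero
      · exact inv_ne_zero (Nat.cast_ne_zero.mpr (Nat.factorial_ne_zero n))
      · refine Finset.prod_ne_zero_iff.mpr fun m hm => ?_
        rw [Finset.mem_Icc] at hm
        have h1 : (m:ℚ) ≤ n := by exact_mod_cast hm.2
        intro h
        linarith
    have hdetA : A.det ≠ 0 := by
      rw [Matrix.det_of_lowerTriangular A (fun i j h => hAtri i j h)]
      exact Finset.prod_ne_zero_iff.mpr fun d _ => hAdiag d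
    have hsplit : A.det = Mᵀ.det * V.det := by rw [hAMV, Matrix.det_mul]
    have hMT : Mᵀ.det ≠ 0 := by
      intro h
      rw [hsplit, h, zero_mul] at hdetA
      exact hdetA rfl
    rw [← Matrix.det_transpose]
    exact isUnit_iff_ne_zero.mpr hMT
  -- each C_d is a combination of the c_i
  have hCc : ∀ d : Fin (n+1),
      eulerianBasis r n d.1 = ∑ i : Fin (n+1), (M⁻¹ d i) • eulerianIdem r n i.1 := by
    intro d
    have h1 : M⁻¹ * M = 1 := Matrix.nonsing_inv_mul M hMdet
    symm
    calc ∑ i : Fin (n+1), M⁻¹ d i • eulerianIdem r n i.1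
        = ∑ i : Fin (n+1), ∑ e : Fin (n+1), (M⁻¹ d i * M i e) • eulerianBasis r n e.1 := by
          refine Finset.sum_congr rfl fun i _ => ?_
          rw [hcC i, Finset.smul_sum]
          exact Finset.sum_congr rfl fun e _ => (mul_smul _ _ _).symm
      _ = ∑ e : Fin (n+1), ((M⁻¹ * M) d e) • eulerianBasis r n e.1 := by
          rw [Finset.sum_comm]
          refine Finset.sum_congr rfl fun e _ => ?_
          rw [Matrix.mul_apply, Finset.sum_smul]
      _ = eulerianBasis r n d.1 := by
          rw [h1]
          simp [Matrix.one_apply]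
  apply le_antisymm
  · rw [Submodule.span_le]
    rintro x ⟨m, hm, rfl⟩
    rw [(hcC ⟨m, Nat.lt_succ_of_le hm⟩ :
      eulerianIdem r n m = ∑ d : Fin (n+1), M ⟨m, Nat.lt_succ_of_le hm⟩ d • eulerianBasis r n d.1)]
    refine Submodule.sum_mem _ fun d _ => Submodule.smul_mem _ _ (Submodule.subset_span ?_)
    exact ⟨d.1, Nat.lt_succ_iff.mp d.isLt, rfl⟩
  · rw [Submodule.span_le]
    rintro x ⟨m, hm, rfl⟩
    rw [(hCc ⟨m, Nat.lt_succ_of_le hm⟩ :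
      eulerianBasis r n m = ∑ i : Fin (n+1), M⁻¹ ⟨m, Nat.lt_succ_of_le hm⟩ i • eulerianIdem r n i.1)]
    refine Submodule.sum_mem _ fun i _ => Submodule.smul_mem _ _ (Submodule.subset_span ?_)
    exact ⟨i.1, Nat.lt_succ_iff.mp i.isLt, rfl⟩
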